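/- arXiv:2006.12354 — 2 statements merged into one kernel-verified Lean document; each statement's English description precedes it below -/
import Mathlib

section
/- For fixed x₀ > 0, the function q₁(x) = -(ln x - ln x₀)/(x - x₀) (for x ≠ x₀, extended continuously at x₀) is concave on (0,∞): q₁''(x) ≤ 0 for all x > 0, x ≠ x₀. -/
open Real Set Filter

theorem stmt3 (x₀ : ℝ) (hx₀ : 0 < x₀)
    (q₁ : ℝ → ℝ)
    (hq₁ : q₁ = fun x => if x = x₀ then -(1 / x₀)
      else -(Real.log x - Real.log x₀) / (x - x₀)) :
    ∀ x : ℝ, 0 < x → x ≠ x₀ → deriv (deriv q₁) x ≤ 0 := by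
  intro x hx hne
  set g : ℝ → ℝ := fun y => -(Real.log y - Real.log x₀) / (y - x₀) with hgdef
  set g' : ℝ → ℝ := fun y =>
    (-(y⁻¹) * (y - x₀) - -(Real.log y - Real.log x₀) * 1) / (y - x₀) ^ 2 with hg'def
  set U : Set ℝ := Ioi 0 \ {x₀} with hUdef
  have hUopen : IsOpen U := isOpen_Ioi.sdiff isClosed_singleton
  have hxU : x ∈ U := ⟨hx, hne⟩
  have hqg : q₁ =ᶠ[nhds x] g := by
    have ho : IsOpen {y : ℝ | y ≠ x₀} := isOpen_compl_singleton
    filter_upwards [ho.mem_nhds hne] with y hy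
    simp only [hq₁, hgdef, if_neg hy]
  have hder1 : ∀ y ∈ U, HasDerivAt g (g' y) y := by
    intro y hy
    have hy0 : y ≠ 0 := ne_of_gt hy.1
    have hyx : y - x₀ ≠ 0 := sub_ne_zero.mpr hy.2
    have h1 : HasDerivAt (fun y => -(Real.log y - Real.log x₀)) (-(y⁻¹)) y :=
      ((Real.hasDerivAt_log hy0).sub_const _).neg
    have h2 : HasDerivAt (fun y : ℝ => y - x₀) 1 y := (hasDerivAt_id y).sub_const _
    exact h1.div h2 hyx
  have hgg' : deriv g =ᶠ[nhds x] g' := by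
    filter_upwards [hUopen.mem_nhds hxU] with y hy
    exact (hder1 y hy).deriv
  have hx0 : x ≠ 0 := ne_of_gt hx
  have hyx : x - x₀ ≠ 0 := sub_ne_zero.mpr hne
  set C : ℝ := ((x - x₀) ^ 2 / x ^ 2 + 2 * (x - x₀) / x
      - 2 * (Real.log x - Real.log x₀)) / (x - x₀) ^ 3 with hCdef
  have hder2 : HasDerivAt g' C x := by
    have ha : HasDerivAt (fun y : ℝ => -(y⁻¹)) ((x ^ 2)⁻¹) x := by
      simpa using (hasDerivAt_inv hx0).fun_neg
    have hb : HasDerivAt (fun y : ℝ => y - x₀) 1 x := (hasDerivAt_id x).sub_const _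
    have hc : HasDerivAt (fun y => -(Real.log y - Real.log x₀) * 1) (-(x⁻¹) * 1) x :=
      (((Real.hasDerivAt_log hx0).sub_const _).neg).mul_const 1
    have hA := (ha.mul hb).sub hc
    have hB : HasDerivAt (fun y : ℝ => (y - x₀) ^ 2) (2 * (x - x₀)) x := by
      simpa using ((hasDerivAt_id x).sub_const x₀).fun_pow 2
    have h := hA.div hB (pow_ne_zero 2 hyx)
    refine h.congr_deriv ?_
    rw [hCdef]
    simp only [Pi.mul_apply, Pi.sub_apply, id]
    field_simp
    ring
  have hkey : deriv (deriv q₁) x = C := by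
    calc deriv (deriv q₁) x = deriv (deriv g) x := (hqg.deriv).deriv_eq
      _ = deriv g' x := hgg'.deriv_eq
      _ = C := hder2.deriv
  rw [hkey]
  -- Now show C ≤ 0 via monotonicity of F
  set F : ℝ → ℝ := fun y => 2 * (Real.log y - Real.log x₀)
      - (y - x₀) ^ 2 / y ^ 2 - 2 * (y - x₀) / y with hFdef
  have hFder : ∀ y ∈ Ioi (0 : ℝ), HasDerivAt F (2 * (y - x₀) ^ 2 / y ^ 3) y := by
    intro y hy
    have hy0 : y ≠ 0 := ne_of_gt hy
    have h1 : HasDerivAt (fun y => 2 * (Real.log y - Real.log x₀)) (2 * y⁻¹) y :=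
      ((Real.hasDerivAt_log hy0).sub_const _).const_mul 2
    have ha : HasDerivAt (fun y : ℝ => (y - x₀) ^ 2) (2 * (y - x₀)) y := by
      simpa using ((hasDerivAt_id y).sub_const x₀).fun_pow 2
    have hb : HasDerivAt (fun y : ℝ => y ^ 2) (2 * y) y := by
      simpa using hasDerivAt_pow 2 y
    have h2 := ha.div hb (pow_ne_zero 2 hy0)
    have hc : HasDerivAt (fun y : ℝ => 2 * (y - x₀)) 2 y := by
      simpa using ((hasDerivAt_id y).sub_const x₀).const_mul 2
    have h3 := hc.div (hasDerivAt_id y) hy0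
    have h := (h1.sub h2).sub h3
    refine h.congr_deriv ?_
    simp only [id]
    field_simp
    ring
  have hmono : MonotoneOn F (Ioi 0) := by
    apply monotoneOn_of_deriv_nonneg (convex_Ioi 0)
    · exact fun y hy => (hFder y hy).continuousAt.continuousWithinAt
    · intro y hy
      rw [interior_Ioi] at hy
      exact (hFder y hy).differentiableAt.differentiableWithinAt
    · intro y hy
      rw [interior_Ioi] at hy
      rw [(hFder y hy).deriv]
      have hy0 : (0:ℝ) < y := hy
      positivity
  have hFx₀ : F x₀ = 0 := by simp [hFdef]
  have hnum : C = -F x / (x - x₀) ^ 3 := by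
    rw [hCdef, hFdef]; ring_nf
  rw [hnum]
  rcases lt_or_gt_of_ne hne with h | h
  · -- x < x₀ : F x ≤ 0, (x-x₀)^3 < 0
    have hF : F x ≤ 0 := hFx₀ ▸ hmono (mem_Ioi.mpr hx) (mem_Ioi.mpr hx₀) h.le
    have hd : (x - x₀) ^ 3 < 0 := by
      have hneg : x - x₀ < 0 := sub_neg.mpr h
      exact Odd.pow_neg (by decide) hneg
    exact div_nonpos_of_nonneg_of_nonpos (by linarith) hd.le
  · have hF : 0 ≤ F x := hFx₀ ▸ hmono (mem_Ioi.mpr hx₀) (mem_Ioi.mpr hx) h.le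
    have hd : 0 < (x - x₀) ^ 3 := by
      have hpos : 0 < x - x₀ := sub_pos.mpr h
      positivity
    exact div_nonpos_of_nonpos_of_nonneg (by linarith) hd.le
end

section
/- For fixed x₀ > 0 and fixed y > 0, the difference quotient x ↦ (q₁(y) - q₁(x))/(y - x) is a decreasing function of x on (0,∞) (for x ≠ y), where q₁(x) = -(ln x - ln x₀)/(x - x₀). -/
open Set intervalIntegral

private lemma denom_pos {x₀ x t : ℝ} (hx₀ : 0 < x₀) (hx : 0 < x) (ht : t ∈ Icc (0:ℝ) 1) :
    0 < x₀ + t * (x - x₀) := by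
  rcases eq_or_lt_of_le ht.2 with rfl | h1
  · linarith
  · nlinarith [ht.1]

private lemma integrand_integrable {x₀ x : ℝ} (hx₀ : 0 < x₀) (hx : 0 < x) :
    IntervalIntegrable (fun t => (x₀ + t * (x - x₀))⁻¹) MeasureTheory.volume 0 1 := by
  apply ContinuousOn.intervalIntegrable
  rw [uIcc_of_le (by norm_num)]
  exact (ContinuousOn.inv₀ (by fun_prop) fun t ht => (denom_pos hx₀ hx ht).ne')

private lemma combo_pos {u v θ η : ℝ} (hu : 0 < u) (hv : 0 < v) (hθ : 0 ≤ θ) (hη : 0 ≤ η)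
    (h : θ + η = 1) : 0 < θ * u + η * v := by
  rcases hθ.eq_or_lt with rfl | hθ'
  · have : η = 1 := by linarith
    subst this; simpa using hv
  · nlinarith [mul_nonneg hη hv.le]

private lemma inv_combo {u v θ η : ℝ} (hu : 0 < u) (hv : 0 < v) (hθ : 0 ≤ θ) (hη : 0 ≤ η)
    (h : θ + η = 1) : (θ * u + η * v)⁻¹ ≤ θ * u⁻¹ + η * v⁻¹ := by
  have hd : 0 < θ * u + η * v := combo_pos hu hv hθ hη h
  have key : u * v ≤ (θ * v + η * u) * (θ * u + η * v) := by
    have hη' : η = 1 - θ := by linarith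
    subst hη'
    nlinarith [mul_nonneg (mul_nonneg hθ hη) (sq_nonneg (u - v))]
  have heq : θ * u⁻¹ + η * v⁻¹ = (θ * v + η * u) / (u * v) := by
    field_simp
  rw [inv_eq_one_div, heq, div_le_div_iff₀ hd (mul_pos hu hv), one_mul]
  linarith [key]

private lemma g_convex {x₀ : ℝ} (hx₀ : 0 < x₀) :
    ConvexOn ℝ (Ioi 0) (fun x => ∫ t in (0:ℝ)..1, (x₀ + t * (x - x₀))⁻¹) := by
  refine ⟨convex_Ioi 0, fun a ha b hb θ η hθ hη hs => ?_⟩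
  simp only [smul_eq_mul]
  have ha' : (0:ℝ) < a := ha
  have hb' : (0:ℝ) < b := hb
  have key : ∀ t ∈ Icc (0:ℝ) 1,
      (x₀ + t * (θ * a + η * b - x₀))⁻¹
        ≤ θ * (x₀ + t * (a - x₀))⁻¹ + η * (x₀ + t * (b - x₀))⁻¹ := by
    intro t ht
    have h1 : x₀ + t * (θ * a + η * b - x₀)
        = θ * (x₀ + t * (a - x₀)) + η * (x₀ + t * (b - x₀)) := by
      have hθ' : θ = 1 - η := by linarith
      subst hθ'
      ring
    rw [h1]
    exact inv_combo (denom_pos hx₀ ha' ht) (denom_pos hx₀ hb' ht) hθ hη hs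
  have hab : (0:ℝ) < θ * a + η * b := combo_pos ha' hb' hθ hη hs
  have i0 := integrand_integrable hx₀ hab (x := θ * a + η * b)
  have ia := integrand_integrable hx₀ ha'
  have ib := integrand_integrable hx₀ hb'
  calc (∫ t in (0:ℝ)..1, (x₀ + t * (θ * a + η * b - x₀))⁻¹)
      ≤ ∫ t in (0:ℝ)..1, (θ * (x₀ + t * (a - x₀))⁻¹ + η * (x₀ + t * (b - x₀))⁻¹) := by
        apply integral_mono_on (by norm_num) i0 ((ia.const_mul θ).add (ib.const_mul η)) key
    _ = θ * (∫ t in (0:ℝ)..1, (x₀ + t * (a - x₀))⁻¹)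
        + η * (∫ t in (0:ℝ)..1, (x₀ + t * (b - x₀))⁻¹) := by
        rw [integral_add (ia.const_mul θ) (ib.const_mul η), integral_const_mul,
          integral_const_mul]

private lemma g_eq {x₀ x : ℝ} (hx₀ : 0 < x₀) (hx : 0 < x) :
    (∫ t in (0:ℝ)..1, (x₀ + t * (x - x₀))⁻¹)
      = if x = x₀ then 1 / x₀ else (Real.log x - Real.log x₀) / (x - x₀) := by
  by_cases hxx : x = x₀
  · subst hxx
    simp
  · rw [if_neg hxx]
    have hd : x - x₀ ≠ 0 := sub_ne_zero.2 hxx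
    have hderiv : ∀ t ∈ uIcc (0:ℝ) 1,
        HasDerivAt (fun t => Real.log (x₀ + t * (x - x₀)) / (x - x₀))
          ((x₀ + t * (x - x₀))⁻¹) t := by
      intro t ht
      rw [uIcc_of_le (by norm_num)] at ht
      have hpos := denom_pos hx₀ hx ht
      have h1 : HasDerivAt (fun t : ℝ => x₀ + t * (x - x₀)) (x - x₀) t := by
        simpa using ((hasDerivAt_id t).mul_const (x - x₀)).const_add x₀
      have h2 := (h1.log hpos.ne')
      have h3 := h2.div_const (x - x₀)
      rw [div_right_comm, div_self hd, one_div] at h3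
      exact h3
    rw [integral_eq_sub_of_hasDerivAt hderiv (integrand_integrable hx₀ hx)]
    simp only [one_mul, zero_mul, add_zero]
    rw [div_sub_div_same]
    congr 2
    ring

theorem stmt4 (x₀ y : ℝ) (hx₀ : 0 < x₀) (hy : 0 < y)
    (q₁ : ℝ → ℝ)
    (hq₁ : q₁ = fun x => if x = x₀ then -(1 / x₀)
      else -(Real.log x - Real.log x₀) / (x - x₀)) :
    ∀ x₁ x₂ : ℝ, 0 < x₁ → x₁ < x₂ → x₁ ≠ y → x₂ ≠ y →
      (q₁ y - q₁ x₁) / (y - x₁) ≥ (q₁ y - q₁ x₂) / (y - x₂) := by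
  intro x₁ x₂ hx₁ hx₁₂ h1y h2y
  set g : ℝ → ℝ := fun x => ∫ t in (0:ℝ)..1, (x₀ + t * (x - x₀))⁻¹ with hg
  have hq : ∀ x : ℝ, 0 < x → q₁ x = -(g x) := by
    intro x hx
    rw [hq₁, hg]
    simp only
    rw [g_eq hx₀ hx]
    by_cases hxx : x = x₀
    · simp [hxx]
    · rw [if_neg hxx, if_neg hxx, neg_div]
  have hx₂ : 0 < x₂ := hx₁.trans hx₁₂
  have hconv := g_convex hx₀
  have hs := hconv.secant_mono (a := y) (x := x₁) (y := x₂)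
    (mem_Ioi.2 hy) (mem_Ioi.2 hx₁) (mem_Ioi.2 hx₂) h1y h2y hx₁₂.le
  rw [hq y hy, hq x₁ hx₁, hq x₂ hx₂]
  have e1 : (-(g y) - -(g x₁)) / (y - x₁) = -((g x₁ - g y) / (x₁ - y)) := by
    rw [← neg_div_neg_eq]; ring_nf
  have e2 : (-(g y) - -(g x₂)) / (y - x₂) = -((g x₂ - g y) / (x₂ - y)) := by
    rw [← neg_div_neg_eq]; ring_nf
  rw [e1, e2]
  exact neg_le_neg hs
end
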